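/- Let h : X₁ → X₂ be a continuous surjection mapping f₁ to f₂. If f₁ has only finitely many chain components, then f₂ has at most as many chain components as f₁. -/

import Mathlib

/-- The chain relation: `(x,y) ∈ 𝒞f` iff for every `ε > 0` there is a finite
`ε`-chain from `x` to `y`. -/
def ChainRel {X : Type*} [MetricSpace X] (f : X → X) (x y : X) : Prop :=
  ∀ ε : ℝ, 0 < ε → ∃ n : ℕ, 1 ≤ n ∧ ∃ c : ℕ → X, c 0 = x ∧ c n = y ∧
    ∀ i < n, dist (f (c i)) (c (i + 1)) ≤ ε

/-- `B` is a chain component (basic set) of `f`. -/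
def IsBasicSet {X : Type*} [MetricSpace X] (f : X → X) (B : Set X) : Prop :=
  ∃ x, ChainRel f x x ∧ B = {y | ChainRel f x y ∧ ChainRel f y x}

open Filter Topology

theorem unifmod {X Y : Type*} [MetricSpace X] [MetricSpace Y] [CompactSpace X]
    {g : X → Y} (hg : Continuous g) {ε : ℝ} (hε : 0 < ε) :
    ∃ δ, 0 < δ ∧ ∀ a b : X, dist a b ≤ δ → dist (g a) (g b) ≤ ε := by
  have H := CompactSpace.uniformContinuous_of_continuous hg
  rw [Metric.uniformContinuous_iff] at H
  obtain ⟨δ, hδ, H⟩ := H ε hε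
  exact ⟨δ/2, by linarith, fun a b hab => le_of_lt (H (lt_of_le_of_lt hab (by linarith)))⟩

theorem chain_concat {X : Type*} [MetricSpace X] {f : X → X} {x y z : X} {ε : ℝ}
    {n m : ℕ} {c d : ℕ → X}
    (hc0 : c 0 = x) (hcn : c n = y) (hcj : ∀ i < n, dist (f (c i)) (c (i+1)) ≤ ε)
    (hd0 : d 0 = y) (hdm : d m = z) (hdj : ∀ i < m, dist (f (d i)) (d (i+1)) ≤ ε) :
    ∃ e : ℕ → X, e 0 = x ∧ e (n+m) = z ∧ ∀ i < n+m, dist (f (e i)) (e (i+1)) ≤ ε := by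
  refine ⟨fun i => if i < n then c i else d (i - n), ?_, ?_, ?_⟩
  · by_cases h : 0 < n
    · simp [h, hc0]
    · have hn0 : n = 0 := by omega
      have : x = y := by rw [← hc0, ← hcn, hn0]
      simp [hn0, hd0, this]
  · simp [show ¬ (n + m < n) by omega, hdm]
  · intro i hi
    by_cases h : i < n
    · have e1 : (if i < n then c i else d (i - n)) = c i := if_pos h
      have e2 : (if i + 1 < n then c (i+1) else d (i+1 - n)) = c (i+1) := by
        by_cases h2 : i + 1 < n
        · exact if_pos h2
        · have hin : i + 1 = n := by omega
          rw [if_neg h2, hin, Nat.sub_self, hd0, ← hcn]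
      simp only [e1, e2]
      exact hcj i h
    · have e1 : (if i < n then c i else d (i - n)) = d (i - n) := if_neg h
      have e2 : (if i + 1 < n then c (i+1) else d (i+1 - n)) = d (i - n + 1) := by
        rw [if_neg (by omega)]
        congr 1
        omega
      simp only [e1, e2]
      exact hdj (i - n) (by omega)

theorem chainRel_trans {X : Type*} [MetricSpace X] {f : X → X} {x y z : X}
    (h1 : ChainRel f x y) (h2 : ChainRel f y z) : ChainRel f x z := by
  intro ε hε
  obtain ⟨n, hn, c, hc0, hcn, hcj⟩ := h1 ε hε
  obtain ⟨m, hm, d, hd0, hdm, hdj⟩ := h2 ε hε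
  obtain ⟨e, he⟩ := chain_concat hc0 hcn hcj hd0 hdm hdj
  exact ⟨n + m, by omega, e, he⟩

theorem chainRel_orbit {X : Type*} [MetricSpace X] (f : X → X) (u : X) {m : ℕ}
    (hm : 1 ≤ m) : ChainRel f u (f^[m] u) := by
  intro ε hε
  refine ⟨m, hm, fun i => f^[i] u, rfl, rfl, fun i _ => ?_⟩
  rw [← Function.iterate_succ_apply' f i u]
  simp [hε.le]

theorem chainRel_closed {X : Type*} [MetricSpace X] [CompactSpace X] {f : X → X}
    (hf : Continuous f) {u v : ℕ → X} {x y : X}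
    (hu : Tendsto u atTop (𝓝 x)) (hv : Tendsto v atTop (𝓝 y))
    (hc : ∀ k, ChainRel f (u k) (v k)) : ChainRel f x y := by
  intro ε hε
  have hε3 : 0 < ε/3 := by linarith
  obtain ⟨δ, hδ, hmod⟩ := unifmod hf hε3
  rw [Metric.tendsto_atTop] at hu hv
  obtain ⟨N1, hN1⟩ := hu δ hδ
  obtain ⟨N2, hN2⟩ := hv (ε/3) hε3
  set k := max N1 N2 with hk
  have hux : dist (u k) x ≤ δ := (hN1 k (le_max_left _ _)).le
  have hvy : dist (v k) y ≤ ε/3 := (hN2 k (le_max_right _ _)).le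
  obtain ⟨n, hn, c, hc0, hcn, hcj⟩ := hc k (ε/3) hε3
  refine ⟨n, hn, fun i => if i = 0 then x else if n ≤ i then y else c i, by simp, ?_, ?_⟩
  · simp [show n ≠ 0 by omega]
  · intro i hi
    beta_reduce
    have key0 : dist (f x) (f (c 0)) ≤ ε/3 := by
      rw [hc0]; exact hmod _ _ (by rw [dist_comm]; exact hux)
    by_cases h0 : i = 0
    · subst h0
      rw [if_pos rfl]
      by_cases h1 : n = 1
      · have e2 : (if (1:ℕ) = 0 then x else if n ≤ 1 then y else c 1) = y := by
          simp [h1]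
        rw [e2]
        have : dist (f (c 0)) (c 1) ≤ ε/3 := hcj 0 (by omega)
        calc dist (f x) y ≤ dist (f x) (f (c 0)) + dist (f (c 0)) (c 1) + dist (c 1) y :=
              dist_triangle4 _ _ _ _
          _ ≤ ε/3 + ε/3 + ε/3 := by
              have : dist (c 1) y ≤ ε/3 := by
                have hc1 : c 1 = v k := h1 ▸ hcn
                rw [hc1]; exact hvy
              linarith [key0, hcj 0 (show 0 < n by omega)]
          _ = ε := by ring
      · have e2 : (if (1:ℕ) = 0 then x else if n ≤ 1 then y else c 1) = c 1 := by
          simp [show ¬ n ≤ 1 by omega]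
        rw [e2]
        calc dist (f x) (c 1) ≤ dist (f x) (f (c 0)) + dist (f (c 0)) (c 1) :=
              dist_triangle _ _ _
          _ ≤ ε/3 + ε/3 := by linarith [key0, hcj 0 (show 0 < n by omega)]
          _ ≤ ε := by linarith
    · have e1 : (if i = 0 then x else if n ≤ i then y else c i) = c i := by
        simp [h0, show ¬ n ≤ i by omega]
      rw [e1]
      by_cases h2 : i + 1 = n
      · have e2 : (if i + 1 = 0 then x else if n ≤ i + 1 then y else c (i+1)) = y := by
          simp [show i + 1 ≠ 0 by omega, show n ≤ i + 1 by omega]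
        rw [e2]
        calc dist (f (c i)) y ≤ dist (f (c i)) (c (i+1)) + dist (c (i+1)) y :=
              dist_triangle _ _ _
          _ ≤ ε/3 + ε/3 := by
              have : dist (c (i+1)) y ≤ ε/3 := by rw [h2, hcn]; exact hvy
              linarith [hcj i hi]
          _ ≤ ε := by linarith
      · have e2 : (if i + 1 = 0 then x else if n ≤ i + 1 then y else c (i+1)) = c (i+1) := by
          simp [show i + 1 ≠ 0 by omega, show ¬ n ≤ i + 1 by omega]
        rw [e2]
        linarith [hcj i hi]

theorem chainRel_shift {X : Type*} [MetricSpace X] [CompactSpace X] {f : X → X}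
    (hf : Continuous f) {x y : X}
    (h1 : ChainRel f x y) (h2 : ChainRel f y y) : ChainRel f (f x) y := by
  intro ε hε
  have hε2 : 0 < ε/2 := by linarith
  obtain ⟨δ, hδ, hmod⟩ := unifmod hf hε2
  set δ' := min δ (ε/2) with hδ'def
  have hδ' : 0 < δ' := lt_min hδ hε2
  obtain ⟨n, hn, c, hc0, hcn, hcj⟩ := h1 δ' hδ'
  obtain ⟨m, hm, d, hd0, hdm, hdj⟩ := h2 δ' hδ'
  obtain ⟨e, he0, heN, hej⟩ := chain_concat hc0 hcn hcj hd0 hdm hdj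
  set N := n + m with hN
  have hN2 : 2 ≤ N := by omega
  refine ⟨N - 1, by omega, fun i => if i = 0 then f x else e (i + 1), by simp, ?_, ?_⟩
  · beta_reduce
    rw [if_neg (by omega)]
    rw [show N - 1 + 1 = N by omega]
    exact heN
  · intro i hi
    beta_reduce
    by_cases h0 : i = 0
    · subst h0
      rw [if_pos rfl, if_neg (by omega)]
      have h01 : dist (f x) (e 1) ≤ δ := by
        have := hej 0 (by omega)
        rw [he0] at this
        exact this.trans (min_le_left _ _)
      calc dist (f (f x)) (e 2) ≤ dist (f (f x)) (f (e 1)) + dist (f (e 1)) (e 2) :=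
            dist_triangle _ _ _
        _ ≤ ε/2 + ε/2 := by
            have j1 := hej 1 (by omega)
            have : dist (f (e 1)) (e 2) ≤ ε/2 := j1.trans (min_le_right _ _)
            linarith [hmod _ _ h01]
        _ = ε := by ring
    · rw [if_neg h0, if_neg (by omega)]
      have := hej (i+1) (by omega)
      have h2' : dist (f (e (i+1))) (e (i+1+1)) ≤ ε/2 := this.trans (min_le_right _ _)
      linarith

theorem chainRel_iterate_back {X : Type*} [MetricSpace X] [CompactSpace X] {f : X → X}
    (hf : Continuous f) {y : X} (h2 : ChainRel f y y) (n : ℕ) :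
    ChainRel f (f^[n] y) y := by
  induction n with
  | zero => exact h2
  | succ k ih =>
      rw [Function.iterate_succ_apply']
      exact chainRel_shift hf ih h2

theorem chainRel_map {X₁ X₂ : Type*} [MetricSpace X₁] [MetricSpace X₂] [CompactSpace X₁]
    {f₁ : X₁ → X₁} {f₂ : X₂ → X₂} {h : X₁ → X₂} (hh : Continuous h)
    (hcomm : ∀ a, h (f₁ a) = f₂ (h a)) {a b : X₁}
    (hab : ChainRel f₁ a b) : ChainRel f₂ (h a) (h b) := by
  intro ε hε
  obtain ⟨δ, hδ, hmod⟩ := unifmod hh hε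
  obtain ⟨n, hn, c, hc0, hcn, hcj⟩ := hab δ hδ
  refine ⟨n, hn, fun i => h (c i), by beta_reduce; rw [hc0], by beta_reduce; rw [hcn],
    fun i hi => ?_⟩
  beta_reduce
  rw [← hcomm]
  exact hmod _ _ (hcj i hi)

/-- if `h` is a continuous surjection mapping `f₁` to `f₂` and
`f₁` has finitely many chain components, then `f₂` has at most as many chain
components as `f₁`. -/
theorem stmt_8 {X₁ X₂ : Type*} [MetricSpace X₁] [MetricSpace X₂]
    [CompactSpace X₁] [CompactSpace X₂]
    (f₁ : X₁ → X₁) (f₂ : X₂ → X₂) (hf₁ : Continuous f₁) (hf₂ : Continuous f₂)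
    (h : X₁ → X₂) (hh : Continuous h) (hsurj : Function.Surjective h)
    (hcomm : h ∘ f₁ = f₂ ∘ h)
    (hfin : {B : Set X₁ | IsBasicSet f₁ B}.Finite) :
    {B : Set X₂ | IsBasicSet f₂ B}.Finite ∧
      {B : Set X₂ | IsBasicSet f₂ B}.ncard ≤ {B : Set X₁ | IsBasicSet f₁ B}.ncard := by
  have hsemi : ∀ a, h (f₁ a) = f₂ (h a) := fun a => congrFun hcomm a
  have hit : ∀ (n : ℕ) (a : X₁), h (f₁^[n] a) = f₂^[n] (h a) := fun n a =>
    (Function.Semiconj.iterate_right hsemi n) a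
  set ψ : Set X₁ → Set X₂ := fun B =>
    {y | ∃ x ∈ B, ChainRel f₂ (h x) y ∧ ChainRel f₂ y (h x)} with hψ
  have key : {B : Set X₂ | IsBasicSet f₂ B} ⊆ ψ '' {B : Set X₁ | IsBasicSet f₁ B} := by
    rintro B₂ ⟨y₂, hy₂, rfl⟩
    obtain ⟨x, rfl⟩ := hsurj y₂
    obtain ⟨z, -, φ, hφ, hz⟩ := isCompact_univ.tendsto_subseq
      (fun n => (Set.mem_univ (f₁^[n] x)))
    -- z is chain recurrent for f₁
    have horb : ∀ a b : ℕ, a < b → ChainRel f₁ (f₁^[a] x) (f₁^[b] x) := by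
      intro a b hab
      have hb : f₁^[b] x = f₁^[b - a] (f₁^[a] x) := by
        rw [← Function.iterate_add_apply]
        congr 1
        omega
      rw [hb]
      exact chainRel_orbit f₁ _ (by omega)
    have hzz : ChainRel f₁ z z := by
      apply chainRel_closed hf₁ (u := fun k => f₁^[φ (2*k)] x) (v := fun k => f₁^[φ (2*k+1)] x)
      · have h2k : Tendsto (fun k => 2*k) atTop atTop :=
          tendsto_atTop_mono (fun k => by show k ≤ _; omega) tendsto_id
        simpa [Function.comp_def] using hz.comp h2k
      · have h2k : Tendsto (fun k => 2*k+1) atTop atTop :=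
          tendsto_atTop_mono (fun k => by show k ≤ _; omega) tendsto_id
        simpa [Function.comp_def] using hz.comp h2k
      · intro k
        exact horb _ _ (hφ (by omega))
    -- the image orbit converges to h z
    have himg : Tendsto (fun k => f₂^[φ k] (h x)) atTop (𝓝 (h z)) := by
      have : Tendsto (fun k => h (f₁^[φ k] x)) atTop (𝓝 (h z)) := by
        have := (hh.tendsto z).comp hz
        simpa [Function.comp_def] using this
      simpa only [hit] using this
    have hw1 : ChainRel f₂ (h x) (h z) := by
      apply chainRel_closed hf₂ (u := fun _ => h x) (v := fun k => f₂^[φ (k+1)] (h x))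
        tendsto_const_nhds
      · exact himg.comp (tendsto_add_atTop_nat 1)
      · intro k
        exact chainRel_orbit f₂ (h x) (lt_of_lt_of_le (Nat.succ_pos k) hφ.le_apply)
    have hw2 : ChainRel f₂ (h z) (h x) := by
      apply chainRel_closed hf₂ (u := fun k => f₂^[φ k] (h x)) (v := fun _ => h x) himg
        tendsto_const_nhds
      intro k
      exact chainRel_iterate_back hf₂ hy₂ (φ k)
    refine ⟨{y | ChainRel f₁ z y ∧ ChainRel f₁ y z}, ⟨z, hzz, rfl⟩, ?_⟩
    ext y
    simp only [hψ, Set.mem_setOf_eq]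
    constructor
    · rintro ⟨x', ⟨hzx', hx'z⟩, hxy, hyx⟩
      exact ⟨chainRel_trans hw1 (chainRel_trans (chainRel_map hh hsemi hzx') hxy),
        chainRel_trans hyx (chainRel_trans (chainRel_map hh hsemi hx'z) hw2)⟩
    · rintro ⟨h1, h2⟩
      exact ⟨z, ⟨hzz, hzz⟩, chainRel_trans hw2 h1, chainRel_trans h2 hw1⟩
  have hfin2 : {B : Set X₂ | IsBasicSet f₂ B}.Finite := (hfin.image ψ).subset key
  exact ⟨hfin2, (Set.ncard_le_ncard key (hfin.image ψ)).trans (Set.ncard_image_le hfin)⟩
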